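/- arXiv:2102.03414 — 7 statements merged into one kernel-verified Lean document; each statement's English description precedes it below -/
import Mathlib

section
/- Let y* ∈ (0, η₂) and define u(y) := ((y*(1+ρx̲) − α^{−γ})/(ρλ))·(y/y*)^{λ} − x̲·y + α^{1−γ}/(δ(1−γ)) for y > 0. Then: (a) u'(y) < 0 and u''(y) > 0 for all y > 0; (b) lim_{y→+∞} u'(y) = −x̲ and lim_{y→+∞} y·u''(y) = 0; (c) y* − ρ·y*·u'(y*) = α^{−γ}; and (d) u satisfies −κ·y²·u''(y) + (r + ρ(1−α) − δ)·y·u'(y) + δ·u(y) = α^{1−γ}/(1−γ) − α·y for all y > 0. -/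
open Real Set Filter Topology

lemma aux_lt_sqrt (b c : ℝ) (hc : 0 < c) : b < Real.sqrt (b ^ 2 + c) := by
  rcases le_or_gt b 0 with hb | hb
  · exact lt_of_le_of_lt hb (Real.sqrt_pos.mpr (by positivity))
  · exact (Real.lt_sqrt hb.le).mpr (by linarith)

set_option maxHeartbeats 2000000 in
/-- Properties of the explicit solution `u` of the linear Euler equation on `[y*, ∞)`:
`u` is strictly decreasing and strictly convex, `u' → -x̲` and `y u'' → 0` at `+∞`,
the free-boundary condition `y* - ρ y* u'(y*) = α^(-γ)` holds, and `u` satisfies the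
linear Euler ODE for all `y > 0`. -/
theorem explicit_u_properties
    (r μ σ ρ α δ γ κ xl lam η1 η2 : ℝ)
    (hr : 0 < r) (hμ : r < μ) (hσ : 0 < σ) (hρ : 0 < ρ)
    (hα0 : 0 < α) (hα1 : α ≤ 1) (hδ : 0 < δ) (hγ : 1 < γ)
    (hκ : κ = (μ - r) ^ 2 / (2 * σ ^ 2))
    (hxl : xl = α / (r + ρ * (1 - α)))
    (hlam : lam = (1 / (2 * κ)) *
      ((κ + r + ρ * (1 - α) - δ) -
        Real.sqrt ((κ + r + ρ * (1 - α) - δ) ^ 2 + 4 * δ * κ)))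
    (hη1 : η1 = lam * α ^ (-γ) / ((lam - 1) * (1 + ρ * xl)))
    (hη2 : η2 = α ^ (-γ) / (1 + ρ * xl))
    (ys : ℝ) (hys0 : 0 < ys) (hys2 : ys < η2)
    (u : ℝ → ℝ)
    (hu : ∀ y, u y = ((ys * (1 + ρ * xl) - α ^ (-γ)) / (ρ * lam)) * (y / ys) ^ lam
      - xl * y + α ^ (1 - γ) / (δ * (1 - γ))) :
    (∀ y, 0 < y → deriv u y < 0 ∧ 0 < deriv (deriv u) y) ∧
    Tendsto (deriv u) atTop (𝓝 (-xl)) ∧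
    Tendsto (fun y => y * deriv (deriv u) y) atTop (𝓝 0) ∧
    ys - ρ * ys * deriv u ys = α ^ (-γ) ∧
    (∀ y, 0 < y →
      -κ * y ^ 2 * deriv (deriv u) y + (r + ρ * (1 - α) - δ) * y * deriv u y
        + δ * u y = α ^ (1 - γ) / (1 - γ) - α * y) := by
  -- Abbreviations
  have hu' : u = fun y => ((ys * (1 + ρ * xl) - α ^ (-γ)) / (ρ * lam)) * (y / ys) ^ lam
      - xl * y + α ^ (1 - γ) / (δ * (1 - γ)) := funext hu
  subst hu'
  set C : ℝ := (ys * (1 + ρ * xl) - α ^ (-γ)) / (ρ * lam) with hCdef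
  set K : ℝ := α ^ (1 - γ) / (δ * (1 - γ)) with hKdef
  -- basic positivity facts
  have hκpos : 0 < κ := by
    rw [hκ]
    have h1 : 0 < (μ - r) ^ 2 := pow_pos (sub_pos.mpr hμ) 2
    positivity
  have hApos : 0 < r + ρ * (1 - α) := by nlinarith
  have hxlpos : 0 < xl := by rw [hxl]; exact div_pos hα0 hApos
  have h1ρ : 0 < 1 + ρ * xl := by nlinarith
  -- lam < 0 and the characteristic equation
  set S : ℝ := Real.sqrt ((κ + r + ρ * (1 - α) - δ) ^ 2 + 4 * δ * κ) with hSdef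
  have hBS : 2 * κ * lam = (κ + r + ρ * (1 - α) - δ) - S := by
    rw [hlam]; field_simp
  have hS2 : S ^ 2 = (κ + r + ρ * (1 - α) - δ) ^ 2 + 4 * δ * κ := Real.sq_sqrt (by positivity)
  have hSnn : 0 ≤ S := Real.sqrt_nonneg _
  have hBltS : κ + r + ρ * (1 - α) - δ < S := aux_lt_sqrt _ _ (by positivity)
  have hlamneg : lam < 0 := by nlinarith [hBS, hBltS, hκpos]
  have char : κ * lam ^ 2 - (κ + (r + ρ * (1 - α)) - δ) * lam - δ = 0 := by
    have h4 : 4 * κ * (κ * lam ^ 2 - (κ + (r + ρ * (1 - α)) - δ) * lam - δ) = 0 := by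
      linear_combination (2 * κ * lam - (κ + r + ρ * (1 - α) - δ) - S) * hBS + hS2
    have h4κ : (4 : ℝ) * κ ≠ 0 := by positivity
    exact (mul_eq_zero.mp h4).resolve_left h4κ
  -- C > 0
  have hnum : ys * (1 + ρ * xl) < α ^ (-γ) := by
    have := hys2
    rw [hη2] at this
    exact (lt_div_iff₀ h1ρ).mp this
  have hCpos : 0 < C := by
    rw [hCdef]
    exact div_pos_of_neg_of_neg (by linarith) (mul_neg_of_pos_of_neg hρ hlamneg)
  -- derivative coefficients
  set d1 : ℝ := C * lam / ys with hd1def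
  set d2 : ℝ := C * lam * (lam - 1) / ys ^ 2 with hd2def
  have hd1neg : d1 < 0 := by
    rw [hd1def]
    exact div_neg_of_neg_of_pos (mul_neg_of_pos_of_neg hCpos hlamneg) hys0
  have hd2pos : 0 < d2 := by
    rw [hd2def]
    exact div_pos (mul_pos_of_neg_of_neg (mul_neg_of_pos_of_neg hCpos hlamneg) (by linarith))
      (by positivity)
  -- generic rpow derivative
  have hpowD : ∀ y : ℝ, 0 < y → ∀ t : ℝ,
      HasDerivAt (fun z : ℝ => (z / ys) ^ t) (t * (y / ys) ^ (t - 1) / ys) y := by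
    intro y hy t
    have h1 : HasDerivAt (fun z : ℝ => z / ys) (1 / ys) y := (hasDerivAt_id y).div_const ys
    have h2 : HasDerivAt (fun s : ℝ => s ^ t) (t * (y / ys) ^ (t - 1)) (y / ys) :=
      Real.hasDerivAt_rpow_const (Or.inl (div_pos hy hys0).ne')
    have h3 := h2.comp y h1
    exact h3.congr_deriv (by ring)
  set u1 : ℝ → ℝ := fun y => d1 * (y / ys) ^ (lam - 1) - xl with hu1def
  clear_value u1 d1 d2 C K S
  clear hu hlam hSdef
  have hd1At : ∀ y : ℝ, 0 < y →
      HasDerivAt (fun y => C * (y / ys) ^ lam - xl * y + K) (u1 y) y := by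
    intro y hy
    have h1 := (((hpowD y hy lam).const_mul C).sub ((hasDerivAt_id y).const_mul xl)).add_const K
    refine h1.congr_deriv ?_
    rw [hu1def, hd1def]
    ring
  have hd2At : ∀ y : ℝ, 0 < y → HasDerivAt u1 (d2 * (y / ys) ^ (lam - 2)) y := by
    intro y hy
    have h1 := ((hpowD y hy (lam - 1)).const_mul d1).sub_const xl
    rw [hu1def]
    refine h1.congr_deriv ?_
    rw [hd2def, hd1def]
    rw [show lam - 1 - 1 = lam - 2 by ring]
    ring
  have hderiv1 : ∀ y : ℝ, 0 < y →
      deriv (fun y => C * (y / ys) ^ lam - xl * y + K) y = u1 y := fun y hy => (hd1At y hy).deriv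
  have hderiv2 : ∀ y : ℝ, 0 < y →
      deriv (deriv (fun y => C * (y / ys) ^ lam - xl * y + K)) y
        = d2 * (y / ys) ^ (lam - 2) := by
    intro y hy
    have hev : deriv (fun y => C * (y / ys) ^ lam - xl * y + K) =ᶠ[𝓝 y] u1 := by
      filter_upwards [Ioi_mem_nhds hy] with z hz using hderiv1 z hz
    rw [hev.deriv_eq]
    exact (hd2At y hy).deriv
  -- rpow identities
  have hQ1 : ∀ y : ℝ, 0 < y → y * (y / ys) ^ (lam - 1) = ys * (y / ys) ^ lam := by
    intro y hy
    have hne : y / ys ≠ 0 := (div_pos hy hys0).ne'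
    have h1 : (y / ys) ^ lam = (y / ys) ^ (lam - 1) * (y / ys) := by
      rw [← Real.rpow_add_one hne (lam - 1)]; ring_nf
    rw [h1]
    field_simp
  have hQ2 : ∀ y : ℝ, 0 < y → y * (y / ys) ^ (lam - 2) = ys * (y / ys) ^ (lam - 1) := by
    intro y hy
    have hne : y / ys ≠ 0 := (div_pos hy hys0).ne'
    have h1 : (y / ys) ^ (lam - 1) = (y / ys) ^ (lam - 2) * (y / ys) := by
      rw [← Real.rpow_add_one hne (lam - 2)]; ring_nf
    rw [h1]
    field_simp
  -- tendsto of the power term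
  have hQtend : Tendsto (fun y : ℝ => (y / ys) ^ (lam - 1)) atTop (𝓝 0) := by
    have h1 : Tendsto (fun y : ℝ => y / ys) atTop atTop :=
      Tendsto.atTop_div_const hys0 tendsto_id
    have h2 : Tendsto (fun t : ℝ => t ^ (lam - 1)) atTop (𝓝 0) := by
      have := tendsto_rpow_neg_atTop (show (0:ℝ) < 1 - lam by linarith)
      simpa [neg_sub] using this
    exact h2.comp h1
  refine ⟨?_, ?_, ?_, ?_, ?_⟩
  · -- (a)
    intro y hy
    rw [hderiv1 y hy, hderiv2 y hy]
    have hQpos : (0:ℝ) < (y / ys) ^ (lam - 1) := Real.rpow_pos_of_pos (div_pos hy hys0) _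
    have hQ2pos : (0:ℝ) < (y / ys) ^ (lam - 2) := Real.rpow_pos_of_pos (div_pos hy hys0) _
    constructor
    · rw [hu1def]
      have : d1 * (y / ys) ^ (lam - 1) < 0 := mul_neg_of_neg_of_pos hd1neg hQpos
      linarith [hxlpos]
    · exact mul_pos hd2pos hQ2pos
  · -- (b-1)
    have h1 : Tendsto u1 atTop (𝓝 (-xl)) := by
      rw [hu1def]
      have := (hQtend.const_mul d1).sub_const xl
      simpa using this
    refine h1.congr' ?_
    filter_upwards [eventually_gt_atTop (0:ℝ)] with y hy using (hderiv1 y hy).symm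
  · -- (b-2)
    have h1 : Tendsto (fun y : ℝ => (ys * d2) * (y / ys) ^ (lam - 1)) atTop (𝓝 0) := by
      have := hQtend.const_mul (ys * d2)
      simpa using this
    refine h1.congr' ?_
    filter_upwards [eventually_gt_atTop (0:ℝ)] with y hy
    rw [hderiv2 y hy]
    linear_combination (-d2) * hQ2 y hy
  · -- (c)
    rw [hderiv1 ys hys0, hu1def]
    beta_reduce
    have hys1 : (ys / ys : ℝ) = 1 := div_self hys0.ne'
    rw [hys1, Real.one_rpow, mul_one]
    rw [hd1def, hCdef]
    field_simp [hρ.ne', hys0.ne', hlamneg.ne]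
    ring
  · -- (d)
    intro y hy
    rw [hderiv1 y hy, hderiv2 y hy, hu1def]
    beta_reduce
    have e1 : y * (y / ys) ^ (lam - 1) = ys * (y / ys) ^ lam := hQ1 y hy
    have e2 : y ^ 2 * (y / ys) ^ (lam - 2) = ys ^ 2 * (y / ys) ^ lam := by
      linear_combination y * hQ2 y hy + ys * hQ1 y hy
    have hd1eq : ys * d1 = C * lam := by rw [hd1def]; field_simp
    have hd2eq : ys ^ 2 * d2 = C * lam * (lam - 1) := by rw [hd2def]; field_simp
    have hxlA : xl * (r + ρ * (1 - α)) = α := by rw [hxl]; field_simp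
    have hKeq : δ * K = α ^ (1 - γ) / (1 - γ) := by
      rw [hKdef]
      have h1 : (1 : ℝ) - γ ≠ 0 := by linarith
      field_simp
    beta_reduce
    linear_combination (-κ * d2) * e2 + ((r + ρ * (1 - α) - δ) * d1) * e1
      + (-κ * ((y / ys) ^ lam)) * hd2eq + ((r + ρ * (1 - α) - δ) * ((y / ys) ^ lam)) * hd1eq
      + (-C * ((y / ys) ^ lam)) * char + (-y) * hxlA + hKeq
end

section
/- Let 0 < a < b and let φ, H : (a,b) → ℝ be differentiable with φ > 0 on (a,b), satisfying the habit free-boundary ODE system on (a,b). Define u(y) := (1/δ)·[ φ(y)·H(y) + (γ/(1−γ))·φ(y)^{1−1/γ} + ((r+ρ−δ)/ρ)·(φ(y) − y) ]. Then y − ρ·y·u'(y) = φ(y) > 0 for all y ∈ (a,b), and u satisfies the nonlinear differential equation −κ·y²·u''(y) + (r + ρ − δ)·y·u'(y) + δ·u(y) = (γ/(1−γ))·( y − ρ·y·u'(y) )^{1−1/γ} for all y ∈ (a,b). -/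
open Real Set Filter Topology

/-- If `(φ, H)` solves the habit free-boundary ODE system on `(a,b)` with `φ > 0`,
then the function `u` built from `(φ, H)` satisfies `y - ρ y u'(y) = φ(y) > 0` and
the nonlinear HJB dual equation
`-κ y² u'' + (r + ρ - δ) y u' + δ u = (γ/(1-γ)) (y - ρ y u')^(1-1/γ)` on `(a,b)`. -/
theorem u_solves_nonlinear_dual_equation
    (r μ σ ρ α δ γ κ : ℝ)
    (hr : 0 < r) (hμ : r < μ) (hσ : 0 < σ) (hρ : 0 < ρ)
    (hα0 : 0 < α) (hα1 : α ≤ 1) (hδ : 0 < δ) (hγ : 1 < γ)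
    (hκ : κ = (μ - r) ^ 2 / (2 * σ ^ 2))
    (a b : ℝ) (ha : 0 < a) (hab : a < b)
    (φ H : ℝ → ℝ)
    (hφpos : ∀ y ∈ Set.Ioo a b, 0 < φ y)
    (hφ' : ∀ y ∈ Set.Ioo a b,
      HasDerivAt φ ((ρ / (κ * y)) * (κ / ρ - H y) * φ y) y)
    (hH' : ∀ y ∈ Set.Ioo a b,
      HasDerivAt H ((ρ / (κ * y)) * (κ / ρ - H y) *
          ((φ y) ^ (-1 / γ) - H y - (r + ρ - δ) / ρ)
        + (r + ρ) / (ρ * φ y) - δ / (ρ * y)) y)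
    (u : ℝ → ℝ)
    (hu : ∀ y, u y = (1 / δ) * (φ y * H y + (γ / (1 - γ)) * (φ y) ^ (1 - 1 / γ)
      + ((r + ρ - δ) / ρ) * (φ y - y))) :
    ∀ y ∈ Set.Ioo a b,
      (y - ρ * y * deriv u y = φ y ∧ 0 < y - ρ * y * deriv u y) ∧
      -κ * y ^ 2 * deriv (deriv u) y + (r + ρ - δ) * y * deriv u y + δ * u y
        = (γ / (1 - γ)) * (y - ρ * y * deriv u y) ^ (1 - 1 / γ) := by
  have hκ0 : 0 < κ := by
    rw [hκ]
    exact div_pos (pow_pos (sub_pos.mpr hμ) 2) (by positivity)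
  have hγ0 : (0:ℝ) < γ := by linarith
  have hγ1 : (1:ℝ) - γ ≠ 0 := by linarith
  -- derivative of u at any point of the interval
  have hu' : ∀ z ∈ Set.Ioo a b, HasDerivAt u ((1/ρ) * (1 - φ z / z)) z := by
    intro z hz
    have hz0 : 0 < z := lt_trans ha hz.1
    have hφz : 0 < φ z := hφpos z hz
    have h1 := hφ' z hz
    have h2 := hH' z hz
    have hrpow : HasDerivAt (fun x => (φ x) ^ (1 - 1/γ))
        (((ρ / (κ * z)) * (κ / ρ - H z) * φ z) * (1 - 1/γ) * (φ z) ^ (1 - 1/γ - 1)) z :=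
      h1.rpow_const (Or.inl (ne_of_gt hφz))
    have hexp : (1:ℝ) - 1/γ - 1 = -1/γ := by ring
    rw [hexp] at hrpow
    have hU : HasDerivAt (fun x => (1 / δ) * (φ x * H x + (γ / (1 - γ)) * (φ x) ^ (1 - 1 / γ)
        + ((r + ρ - δ) / ρ) * (φ x - x)))
        ((1/δ) * ((((ρ / (κ * z)) * (κ / ρ - H z) * φ z) * H z
            + φ z * ((ρ / (κ * z)) * (κ / ρ - H z) *
                ((φ z) ^ (-1 / γ) - H z - (r + ρ - δ) / ρ)
              + (r + ρ) / (ρ * φ z) - δ / (ρ * z)))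
          + (γ / (1 - γ)) * (((ρ / (κ * z)) * (κ / ρ - H z) * φ z) * (1 - 1/γ)
              * (φ z) ^ (-1/γ))
          + ((r + ρ - δ) / ρ) * (((ρ / (κ * z)) * (κ / ρ - H z) * φ z) - 1))) z := by
      exact (((h1.mul h2).add (hrpow.const_mul (γ / (1 - γ)))).add
        ((h1.sub (hasDerivAt_id z)).const_mul ((r + ρ - δ) / ρ))).const_mul (1/δ)
    have hfun : u = fun x => (1 / δ) * (φ x * H x + (γ / (1 - γ)) * (φ x) ^ (1 - 1 / γ)
        + ((r + ρ - δ) / ρ) * (φ x - x)) := funext hu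
    rw [hfun]
    convert hU using 1
    field_simp
    ring
  -- first part
  intro y hy
  have hy0 : 0 < y := lt_trans ha hy.1
  have hφy : 0 < φ y := hφpos y hy
  have hud : deriv u y = (1/ρ) * (1 - φ y / y) := (hu' y hy).deriv
  have hfirst : y - ρ * y * deriv u y = φ y := by
    rw [hud]; field_simp; ring
  -- second derivative
  have hmem : Set.Ioo a b ∈ 𝓝 y := isOpen_Ioo.mem_nhds hy
  have hEq : deriv u =ᶠ[𝓝 y] fun z => (1/ρ) * (1 - φ z / z) := by
    filter_upwards [hmem] with z hz using (hu' z hz).deriv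
  have hg : HasDerivAt (fun z => (1/ρ) * (1 - φ z / z))
      ((1/ρ) * (0 - ((ρ / (κ * y)) * (κ / ρ - H y) * φ y * y - φ y * 1) / y ^ 2)) y := by
    exact ((hasDerivAt_const y (1:ℝ)).sub
      (((hφ' y hy).div (hasDerivAt_id y) (ne_of_gt hy0)))).const_mul (1/ρ)
  have hu'' : deriv (deriv u) y
      = (1/ρ) * (0 - ((ρ / (κ * y)) * (κ / ρ - H y) * φ y * y - φ y * 1) / y ^ 2) := by
    rw [hEq.deriv_eq]; exact hg.deriv
  refine ⟨⟨hfirst, by rw [hfirst]; exact hφy⟩, ?_⟩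
  rw [hfirst, hu'', hud, hu y]
  field_simp
  ring
end

section
/- Let y* ∈ (η₁, η₂), set x* := α^{−γ}/(ρy*) − 1/ρ, and define v(x) := ((λ−1)/λ)·[ ρ·(y*)^{λ}/(α^{−γ} − y*(1+ρx̲)) ]^{1/(λ−1)}·(x − x̲)^{λ/(λ−1)} + α^{1−γ}/(δ(1−γ)) for x ∈ (x̲, x*]. Then: (a) x* > x̲; (b) v'(x) > 0 and v''(x) < 0 for all x ∈ (x̲, x*); (c) lim_{x→x̲⁺} v'(x) = +∞; (d) v'(x*) = y*, and hence (1+ρx*)·v'(x*) = α^{−γ}; (e) v satisfies κ·v'(x)²/v''(x) − α·(x/x̲ − 1)·v'(x) + δ·v(x) = α^{1−γ}/(1−γ) for all x ∈ (x̲, x*). -/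
open Real Set Filter Topology

set_option maxHeartbeats 2000000

/-- Properties of the explicit value function `v` on `(x̲, x*]`: `x* > x̲`;
`v' > 0` and `v'' < 0` on `(x̲, x*)`; `v'(x̲⁺) = +∞`; `v'(x*) = y*`, hence
`(1 + ρ x*) v'(x*) = α^(-γ)`; and `v` solves the HJB free-boundary equation
`κ v'²/v'' - α (x/x̲ - 1) v' + δ v = α^(1-γ)/(1-γ)` on `(x̲, x*)`. -/
theorem value_function_properties_below_threshold
    (r μ σ ρ α δ γ κ xl lam η1 η2 : ℝ)
    (hr : 0 < r) (hμ : r < μ) (hσ : 0 < σ) (hρ : 0 < ρ)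
    (hα0 : 0 < α) (hα1 : α ≤ 1) (hδ : 0 < δ) (hγ : 1 < γ)
    (hκ : κ = (μ - r) ^ 2 / (2 * σ ^ 2))
    (hxl : xl = α / (r + ρ * (1 - α)))
    (hlam : lam = (1 / (2 * κ)) *
      ((κ + r + ρ * (1 - α) - δ) -
        Real.sqrt ((κ + r + ρ * (1 - α) - δ) ^ 2 + 4 * δ * κ)))
    (hη1 : η1 = lam * α ^ (-γ) / ((lam - 1) * (1 + ρ * xl)))
    (hη2 : η2 = α ^ (-γ) / (1 + ρ * xl))
    (ys xs : ℝ) (hys1 : η1 < ys) (hys2 : ys < η2)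
    (hxs : xs = α ^ (-γ) / (ρ * ys) - 1 / ρ)
    (v : ℝ → ℝ)
    (hv : ∀ x, v x = ((lam - 1) / lam) *
        (ρ * ys ^ lam / (α ^ (-γ) - ys * (1 + ρ * xl))) ^ (1 / (lam - 1)) *
        (x - xl) ^ (lam / (lam - 1)) + α ^ (1 - γ) / (δ * (1 - γ))) :
    xl < xs ∧
    (∀ x ∈ Set.Ioo xl xs, 0 < deriv v x ∧ deriv (deriv v) x < 0) ∧
    Tendsto (deriv v) (𝓝[>] xl) atTop ∧
    (deriv v xs = ys ∧ (1 + ρ * xs) * deriv v xs = α ^ (-γ)) ∧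
    (∀ x ∈ Set.Ioo xl xs,
      κ * (deriv v x) ^ 2 / deriv (deriv v) x - α * (x / xl - 1) * deriv v x
        + δ * v x = α ^ (1 - γ) / (1 - γ)) := by
  have hκpos : 0 < κ := by
    rw [hκ]; exact div_pos (pow_pos (sub_pos.2 hμ) 2) (by positivity)
  have hrρ : 0 < r + ρ * (1 - α) := by
    have h0 : 0 ≤ ρ * (1 - α) := mul_nonneg hρ.le (by linarith)
    linarith
  have hxl0 : 0 < xl := by rw [hxl]; exact div_pos hα0 hrρ
  have h1x : 0 < 1 + ρ * xl := by
    have := mul_pos hρ hxl0; linarith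
  set B : ℝ := κ + r + ρ * (1 - α) - δ with hB
  set S : ℝ := Real.sqrt (B ^ 2 + 4 * δ * κ) with hSdef
  have hS0 : (0:ℝ) ≤ B ^ 2 + 4 * δ * κ := by positivity
  have hSsq : S ^ 2 = B ^ 2 + 4 * δ * κ := Real.sq_sqrt hS0
  have hSnn : 0 ≤ S := Real.sqrt_nonneg _
  have hSgt : B < S := by
    rcases lt_or_ge B 0 with h | h
    · exact lt_of_lt_of_le h hSnn
    · rw [hSdef, Real.lt_sqrt h]
      have h4 : 0 < 4 * δ * κ := by positivity
      linarith
  have hlamneg : lam < 0 := by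
    rw [hlam]
    have h1 : (0:ℝ) < 1 / (2 * κ) := by positivity
    have h2 : B - S < 0 := by linarith
    exact mul_neg_of_pos_of_neg h1 h2
  have hlamne : lam ≠ 0 := ne_of_lt hlamneg
  have hlam1neg : lam - 1 < 0 := by linarith
  have hlam1ne : lam - 1 ≠ 0 := ne_of_lt hlam1neg
  have h2kl : 2 * κ * lam = B - S := by
    rw [hlam]; field_simp
  have hq4 : 4 * κ * (κ * lam ^ 2 - B * lam - δ) = 0 := by
    have hS' : S = B - 2 * κ * lam := by linarith
    have : (B - 2 * κ * lam) ^ 2 = B ^ 2 + 4 * δ * κ := by rw [← hS']; exact hSsq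
    linear_combination this
  have hquad : κ * lam ^ 2 - B * lam - δ = 0 := by
    rcases mul_eq_zero.mp hq4 with h | h
    · exact absurd h (by positivity)
    · exact h
  have hαγ : (0:ℝ) < α ^ (-γ) := Real.rpow_pos_of_pos hα0 _
  have hη1pos : 0 < η1 := by
    rw [hη1]
    apply div_pos_of_neg_of_neg
    · exact mul_neg_of_neg_of_pos hlamneg hαγ
    · exact mul_neg_of_neg_of_pos hlam1neg h1x
  have hys0 : 0 < ys := lt_trans hη1pos hys1
  have hysne : ys ≠ 0 := ne_of_gt hys0
  have hD : 0 < α ^ (-γ) - ys * (1 + ρ * xl) := by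
    have h := hys2
    rw [hη2, lt_div_iff₀ h1x] at h
    linarith
  set C : ℝ := ρ * ys ^ lam / (α ^ (-γ) - ys * (1 + ρ * xl)) with hCdef
  have hC : 0 < C := div_pos (mul_pos hρ (Real.rpow_pos_of_pos hys0 _)) hD
  set K : ℝ := C ^ (1 / (lam - 1)) with hKdef
  have hK : 0 < K := Real.rpow_pos_of_pos hC _
  have hKne : K ≠ 0 := ne_of_gt hK
  have hxs' : xs - xl = (α ^ (-γ) - ys * (1 + ρ * xl)) / (ρ * ys) := by
    rw [hxs]
    field_simp
    ring
  have hxsgt : xl < xs := by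
    have := div_pos hD (mul_pos hρ hys0)
    linarith [hxs'.symm ▸ this]
  -- rewrite v
  have hveq : v = fun y => ((lam - 1) / lam * K) * (y - xl) ^ (lam / (lam - 1))
      + α ^ (1 - γ) / (δ * (1 - γ)) := by
    funext y; rw [hv y]
  subst hveq
  set c1 : ℝ := (lam - 1) / lam * K with hc1
  set cst : ℝ := α ^ (1 - γ) / (δ * (1 - γ)) with hcst
  have hexp : lam / (lam - 1) - 1 = 1 / (lam - 1) := by field_simp; ring
  have he1neg : 1 / (lam - 1) < 0 := by
    exact div_neg_of_pos_of_neg one_pos hlam1neg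
  -- first derivative
  have hd1 : ∀ x, xl < x →
      HasDerivAt (fun y => c1 * (y - xl) ^ (lam / (lam - 1)) + cst)
        (K * (x - xl) ^ (1 / (lam - 1))) x := by
    intro x hx
    have hs : 0 < x - xl := sub_pos.2 hx
    have h1 : HasDerivAt (fun y : ℝ => y - xl) 1 x := (hasDerivAt_id x).sub_const xl
    have h2 : HasDerivAt (fun y : ℝ => (y - xl) ^ (lam / (lam - 1)))
        ((lam / (lam - 1)) * (x - xl) ^ (lam / (lam - 1) - 1)) x := by
      have := (Real.hasDerivAt_rpow_const (x := x - xl) (p := lam / (lam - 1))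
        (Or.inl hs.ne')).comp x h1
      simpa [Function.comp_def] using this
    have h3 := (h2.const_mul c1).add_const cst
    refine h3.congr_deriv ?_
    rw [hexp, hc1]
    field_simp
  have hderiv_eq : ∀ x, xl < x →
      deriv (fun y => c1 * (y - xl) ^ (lam / (lam - 1)) + cst) x
        = K * (x - xl) ^ (1 / (lam - 1)) := fun x hx => (hd1 x hx).deriv
  -- second derivative
  have hd2 : ∀ x, xl < x →
      HasDerivAt (fun y => K * (y - xl) ^ (1 / (lam - 1)))
        (K * (1 / (lam - 1)) * (x - xl) ^ (1 / (lam - 1) - 1)) x := by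
    intro x hx
    have hs : 0 < x - xl := sub_pos.2 hx
    have h1 : HasDerivAt (fun y : ℝ => y - xl) 1 x := (hasDerivAt_id x).sub_const xl
    have h2 : HasDerivAt (fun y : ℝ => (y - xl) ^ (1 / (lam - 1)))
        ((1 / (lam - 1)) * (x - xl) ^ (1 / (lam - 1) - 1)) x := by
      have := (Real.hasDerivAt_rpow_const (x := x - xl) (p := 1 / (lam - 1))
        (Or.inl hs.ne')).comp x h1
      simpa [Function.comp_def] using this
    have h3 := h2.const_mul K
    refine h3.congr_deriv ?_
    ring
  have hderiv2 : ∀ x, xl < x →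
      deriv (deriv (fun y => c1 * (y - xl) ^ (lam / (lam - 1)) + cst)) x
        = K * (1 / (lam - 1)) * (x - xl) ^ (1 / (lam - 1) - 1) := by
    intro x hx
    have hEq : deriv (fun y => c1 * (y - xl) ^ (lam / (lam - 1)) + cst)
        =ᶠ[𝓝 x] fun y => K * (y - xl) ^ (1 / (lam - 1)) := by
      filter_upwards [Ioi_mem_nhds hx] with y hy
      exact hderiv_eq y hy
    rw [hEq.deriv_eq, (hd2 x hx).deriv]
  refine ⟨hxsgt, ?_, ?_, ?_, ?_⟩
  · -- signs of derivatives
    rintro x ⟨hx1, hx2⟩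
    have hs : 0 < x - xl := sub_pos.2 hx1
    rw [hderiv_eq x hx1, hderiv2 x hx1]
    constructor
    · exact mul_pos hK (Real.rpow_pos_of_pos hs _)
    · exact mul_neg_of_neg_of_pos (mul_neg_of_pos_of_neg hK he1neg)
        (Real.rpow_pos_of_pos hs _)
  · -- limit at xl from the right
    have hsub : Tendsto (fun y : ℝ => y - xl) (𝓝[>] xl) (𝓝[>] (0:ℝ)) := by
      apply tendsto_nhdsWithin_of_tendsto_nhds_of_eventually_within
      · have : Tendsto (fun y : ℝ => y - xl) (𝓝 xl) (𝓝 (xl - xl)) :=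
          (continuous_id.sub continuous_const).tendsto xl
        simpa using this.mono_left nhdsWithin_le_nhds
      · filter_upwards [self_mem_nhdsWithin] with y hy
        exact sub_pos.2 (Set.mem_Ioi.mp hy)
    have hpow : Tendsto (fun t : ℝ => t ^ (1 / (lam - 1))) (𝓝[>] (0:ℝ)) atTop := by
      have h1 : Tendsto (fun t : ℝ => t⁻¹) (𝓝[>] (0:ℝ)) atTop := tendsto_inv_nhdsGT_zero
      have h2 : Tendsto (fun u : ℝ => u ^ (-(1 / (lam - 1)))) atTop atTop :=
        tendsto_rpow_atTop (by linarith)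
      have h3 := h2.comp h1
      apply h3.congr'
      filter_upwards [self_mem_nhdsWithin] with t ht
      have ht0 : (0:ℝ) < t := ht
      simp only [Function.comp]
      rw [Real.inv_rpow ht0.le, ← Real.rpow_neg ht0.le, neg_neg]
    have hfinal : Tendsto (fun x : ℝ => K * (x - xl) ^ (1 / (lam - 1)))
        (𝓝[>] xl) atTop := by
      have := (hpow.comp hsub).const_mul_atTop hK
      simpa [Function.comp] using this
    apply hfinal.congr'
    filter_upwards [self_mem_nhdsWithin] with y hy
    exact (hderiv_eq y hy).symm
  · -- value of derivative at xs
    have hs : 0 < xs - xl := sub_pos.2 hxsgt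
    have hCx : C * (xs - xl) = ys ^ (lam - 1) := by
      rw [hxs', hCdef, Real.rpow_sub hys0, Real.rpow_one]
      field_simp
    have hval : K * (xs - xl) ^ (1 / (lam - 1)) = ys := by
      rw [hKdef, ← Real.mul_rpow hC.le hs.le, hCx,
        ← Real.rpow_mul hys0.le]
      rw [mul_one_div, div_self hlam1ne, Real.rpow_one]
    constructor
    · rw [hderiv_eq xs hxsgt, hval]
    · rw [hderiv_eq xs hxsgt, hval]
      have h1 : 1 + ρ * xs = α ^ (-γ) / ys := by
        rw [hxs]; field_simp; ring
      rw [h1, div_mul_cancel₀ _ hysne]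
  · -- HJB equation
    rintro x ⟨hx1, hx2⟩
    have hs : 0 < x - xl := sub_pos.2 hx1
    have hsne : x - xl ≠ 0 := ne_of_gt hs
    rw [hderiv_eq x hx1, hderiv2 x hx1]
    have ht : (0:ℝ) < (x - xl) ^ (1 / (lam - 1)) := Real.rpow_pos_of_pos hs _
    have htne : (x - xl) ^ (1 / (lam - 1)) ≠ 0 := ne_of_gt ht
    set t : ℝ := (x - xl) ^ (1 / (lam - 1)) with htdef
    have hβ : (x - xl) ^ (lam / (lam - 1)) = t * (x - xl) := by
      have : lam / (lam - 1) = 1 / (lam - 1) + 1 := by field_simp; ring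
      rw [this, Real.rpow_add hs, Real.rpow_one]
    have hβ' : (x - xl) ^ (1 / (lam - 1) - 1) = t / (x - xl) := by
      rw [Real.rpow_sub hs, Real.rpow_one]
    have hxlterm : α * (x / xl - 1) = (r + ρ * (1 - α)) * (x - xl) := by
      rw [hxl]
      field_simp
    have hγ1 : (1:ℝ) - γ ≠ 0 := ne_of_lt (by linarith)
    have hδne : δ ≠ 0 := ne_of_gt hδ
    rw [hv x]
    simp only [hβ, hβ']
    rw [hxlterm, hcst, hc1]
    have hDen : K * (1 / (lam - 1)) * (t / (x - xl)) ≠ 0 :=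
      mul_ne_zero (mul_ne_zero hKne (one_div_ne_zero hlam1ne)) (div_ne_zero htne hsne)
    have hdiv : κ * (K * t) ^ 2 / (K * (1 / (lam - 1)) * (t / (x - xl)))
        = κ * K * (lam - 1) * t * (x - xl) := by
      rw [div_eq_iff hDen]
      field_simp
    rw [hdiv]
    have key : κ * K * (lam - 1) - (r + ρ * (1 - α)) * K
        + δ * ((lam - 1) / lam * K) = 0 := by
      field_simp
      linear_combination K * hquad
    have hδcst : δ * (α ^ (1 - γ) / (δ * (1 - γ))) = α ^ (1 - γ) / (1 - γ) := by
      rw [eq_div_iff (ne_of_lt (by linarith) : (1:ℝ) - γ ≠ 0)]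
      field_simp
    linear_combination (t * (x - xl)) * key + hδcst
end

section
/- Let η ∈ (η₁, η₂) and let (φ, H) satisfy the habit free-boundary ODE system on (ε, η] for some ε ∈ [0, η), with values in D := {(φ,H) : φ > 0, 0 < H < κ/ρ} on (ε, η), and with boundary conditions φ(η) = α^{−γ} and H(η) = (κ/ρ)·[1 − λ·(1 − η/η₁)]. Then H(y) ≤ (κ/ρ)·[1 − λ·(1 − y/η₁)] for all y ∈ (max(ε, η₁), η]. -/
set_option maxHeartbeats 1200000

open Real Set Filter Topology

lemma key_ineq (r ρ δ κ lam η1 a Ga y W u p : ℝ)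
    (hr : 0 < r) (hρ : 0 < ρ) (hδ : 0 < δ) (hκ : 0 < κ)
    (hlam : lam < 0) (hη1 : 0 < η1) (hy : η1 < y)
    (hW : 0 < W) (hWmax : ρ * W * η1 ≤ κ * lam * (η1 - y))
    (hp : 0 < p) (hGa : 0 < Ga) (hGp : Ga * p ≤ 1)
    (hu : a ≤ u)
    (hid : (r + ρ) * Ga * η1 = δ + κ * lam)
    (hquad : κ * lam ^ 2 = (κ + r + ρ * (1 - a) - δ) * lam + δ) :
    0 < ρ * η1 * p * W * (ρ * u + ρ * W - κ - r - ρ + δ)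
      + κ * (η1 * y * (r + ρ) - η1 * δ * p - κ * lam * y * p) := by
  have hy0 : 0 < y := hη1.trans hy
  have hrest : η1 * y * (r + ρ) - η1 * δ * p - κ * lam * y * p
      = δ * (y - η1) * p + η1 * y * (r + ρ) * (1 - p * Ga) := by
    linear_combination y * p * hid
  have h1 : 0 < δ * (y - η1) * p := by
    have : 0 < y - η1 := by linarith
    positivity
  have h2 : 0 ≤ η1 * y * (r + ρ) * (1 - p * Ga) := by
    apply mul_nonneg (by positivity); nlinarith
  have hrestpos : 0 < κ * (η1 * y * (r + ρ) - η1 * δ * p - κ * lam * y * p) := by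
    rw [hrest]; nlinarith
  rcases le_or_gt 0 (ρ * u - κ - r - ρ + δ) with hb | hb
  · have hq : 0 < ρ * η1 * p * W := by positivity
    nlinarith [mul_nonneg hq.le hb, mul_pos hq (mul_pos hρ hW)]
  · have hcl : 0 < κ * lam * (η1 - y) := by
      have : 0 < (-lam) * (y - η1) := mul_pos (by linarith) (by linarith)
      nlinarith
    have h1' : p * (κ * lam * (η1 - y)) * (ρ * u - κ - r - ρ + δ)
        ≤ ρ * η1 * p * W * (ρ * u - κ - r - ρ + δ) := by
      have := mul_le_mul_of_nonpos_right hWmax hb.le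
      nlinarith
    have h2' : p * (κ * lam * (η1 - y)) * (ρ * a - κ - r - ρ + δ)
        ≤ p * (κ * lam * (η1 - y)) * (ρ * u - κ - r - ρ + δ) := by
      have hle : ρ * a - κ - r - ρ + δ ≤ ρ * u - κ - r - ρ + δ := by nlinarith
      exact mul_le_mul_of_nonneg_left hle (by positivity)
    have h4 : p * (κ * lam * (η1 - y)) * (ρ * a - κ - r - ρ + δ)
        = p * κ * (η1 - y) * (δ - κ * lam ^ 2) := by
      linear_combination p * κ * (η1 - y) * hquad
    have hW2 : 0 < ρ * η1 * p * W * (ρ * W) := by positivity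
    have h5 : 0 ≤ p * κ * (y - η1) * (κ * lam ^ 2) := by
      have hy' : 0 ≤ y - η1 := by linarith
      positivity
    have hexp : ρ * η1 * p * W * (ρ * u + ρ * W - κ - r - ρ + δ)
        = ρ * η1 * p * W * (ρ * u - κ - r - ρ + δ) + ρ * η1 * p * W * (ρ * W) := by ring
    have hbr : p * κ * (η1 - y) * (δ - κ * lam ^ 2) + κ * (δ * (y - η1) * p)
        = p * κ * (y - η1) * (κ * lam ^ 2) := by ring
    have hre : κ * (η1 * y * (r + ρ) - η1 * δ * p - κ * lam * y * p)
        = κ * (δ * (y - η1) * p) + κ * (η1 * y * (r + ρ) * (1 - p * Ga)) := by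
      linear_combination κ * hrest
    have h6 : 0 ≤ κ * (η1 * y * (r + ρ) * (1 - p * Ga)) := mul_nonneg hκ.le h2
    linarith

/-- Upper bound on `H` by the affine comparison function: if `(φ, H)` solves the
habit free-boundary ODE system on `(ε, η]` with values in
`D = {(φ,H) : φ > 0, 0 < H < κ/ρ}` and boundary conditions `φ(η) = α^(-γ)`,
`H(η) = (κ/ρ)(1 - λ(1 - η/η₁))`, then
`H(y) ≤ (κ/ρ)(1 - λ(1 - y/η₁))` for all `y ∈ (max ε η₁, η]`. -/
theorem H_le_affine_comparison
    (r μ σ ρ α δ γ κ xl lam η1 η2 : ℝ)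
    (hr : 0 < r) (hμ : r < μ) (hσ : 0 < σ) (hρ : 0 < ρ)
    (hα0 : 0 < α) (hα1 : α ≤ 1) (hδ : 0 < δ) (hγ : 1 < γ)
    (hκ : κ = (μ - r) ^ 2 / (2 * σ ^ 2))
    (hxl : xl = α / (r + ρ * (1 - α)))
    (hlam : lam = (1 / (2 * κ)) *
      ((κ + r + ρ * (1 - α) - δ) -
        Real.sqrt ((κ + r + ρ * (1 - α) - δ) ^ 2 + 4 * δ * κ)))
    (hη1 : η1 = lam * α ^ (-γ) / ((lam - 1) * (1 + ρ * xl)))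
    (hη2 : η2 = α ^ (-γ) / (1 + ρ * xl))
    (η ε : ℝ) (hηa : η1 < η) (hηb : η < η2) (hε0 : 0 ≤ ε) (hεη : ε < η)
    (φ H : ℝ → ℝ)
    (hcont : ContinuousOn φ (Set.Ioc ε η) ∧ ContinuousOn H (Set.Ioc ε η))
    (hD : ∀ y ∈ Set.Ioo ε η, 0 < φ y ∧ 0 < H y ∧ H y < κ / ρ)
    (hsys : ∀ y ∈ Set.Ioo ε η,
      HasDerivAt φ ((ρ / (κ * y)) * (κ / ρ - H y) * φ y) y ∧
      HasDerivAt H ((ρ / (κ * y)) * (κ / ρ - H y) *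
          ((φ y) ^ (-1 / γ) - H y - (r + ρ - δ) / ρ)
        + (r + ρ) / (ρ * φ y) - δ / (ρ * y)) y)
    (hbcφ : φ η = α ^ (-γ))
    (hbcH : H η = (κ / ρ) * (1 - lam * (1 - η / η1))) :
    ∀ y ∈ Set.Ioc (max ε η1) η, H y ≤ (κ / ρ) * (1 - lam * (1 - y / η1)) := by
  obtain ⟨hcφ, hcH⟩ := hcont
  have hκpos : 0 < κ := by
    rw [hκ]
    have : 0 < μ - r := by linarith
    positivity
  have hq : 0 < r + ρ * (1 - α) := by nlinarith
  set A : ℝ := κ + r + ρ * (1 - α) - δ with hA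
  set s : ℝ := Real.sqrt (A ^ 2 + 4 * δ * κ) with hs
  have hS : s ^ 2 = A ^ 2 + 4 * δ * κ := Real.sq_sqrt (by positivity)
  have hsnn : 0 ≤ s := Real.sqrt_nonneg _
  have hAs : A < s := by nlinarith [mul_pos hδ hκpos]
  have hlamneg : lam < 0 := by
    rw [hlam]
    have h1 : 0 < 1 / (2 * κ) := by positivity
    exact mul_neg_of_pos_of_neg h1 (by linarith)
  have h2κ : 2 * κ * lam = A - s := by
    rw [hlam]; field_simp
  have h44 : 4 * κ * (κ * lam ^ 2 - (A * lam + δ)) = 0 := by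
    linear_combination (2 * κ * lam - A - s) * h2κ + hS
  have hquad : κ * lam ^ 2 = (κ + r + ρ * (1 - α) - δ) * lam + δ := by
    have h4κ : (4 * κ) ≠ 0 := by positivity
    have := (mul_eq_zero.mp h44).resolve_left h4κ
    rw [← hA]; linarith [this]
  have hαγ : 0 < α ^ (-γ) := Real.rpow_pos_of_pos hα0 _
  have hGa : 0 < α ^ γ := Real.rpow_pos_of_pos hα0 _
  have hrn : α ^ (-γ) = (α ^ γ)⁻¹ := Real.rpow_neg hα0.le γ
  have h1x : 1 + ρ * xl = (r + ρ) / (r + ρ * (1 - α)) := by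
    rw [hxl]; field_simp; ring
  have h1xpos : 0 < 1 + ρ * xl := by rw [h1x]; positivity
  have hη1pos : 0 < η1 := by
    rw [hη1]
    apply div_pos_of_neg_of_neg
    · exact mul_neg_of_neg_of_pos hlamneg hαγ
    · exact mul_neg_of_neg_of_pos (by linarith) h1xpos
  have hid : (r + ρ) * (α ^ γ) * η1 = δ + κ * lam := by
    rw [hη1, h1x, hrn]
    have hl1 : lam - 1 ≠ 0 := by intro h; nlinarith
    have hrρ : (r + ρ) ≠ 0 := by positivity
    have hGane : (α ^ γ) ≠ 0 := ne_of_gt hGa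
    field_simp
    linear_combination (-1) * hquad
  -- φ is bounded by α^(-γ)
  have hmono : StrictMonoOn φ (Set.Ioc ε η) := by
    apply strictMonoOn_of_deriv_pos (convex_Ioc ε η) hcφ
    intro x hx
    rw [interior_Ioc] at hx
    rw [(hsys x hx).1.deriv]
    have hDx := hD x hx
    have hx0 : 0 < x := lt_of_le_of_lt hε0 hx.1
    have h1 : 0 < κ / ρ - H x := sub_pos.2 hDx.2.2
    have h2 : 0 < ρ / (κ * x) := by positivity
    exact mul_pos (mul_pos h2 h1) hDx.1
  have hφle : ∀ z ∈ Set.Ioc ε η, φ z ≤ α ^ (-γ) := by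
    intro z hz
    rcases eq_or_lt_of_le hz.2 with h | h
    · rw [h, hbcφ]
    · rw [← hbcφ]; exact (hmono hz ⟨hεη, le_rfl⟩ h).le
  -- the comparison function
  set F : ℝ → ℝ := fun z => (κ / ρ) * (1 - lam * (1 - z / η1)) with hFdef
  have hη1ne : η1 ≠ 0 := ne_of_gt hη1pos
  have hρne : ρ ≠ 0 := ne_of_gt hρ
  have hF' : ∀ z : ℝ, HasDerivAt F (κ * lam / (ρ * η1)) z := by
    intro z
    have h := (((((hasDerivAt_id z).div_const η1).const_sub 1).const_mul lam).const_sub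
      1).const_mul (κ / ρ)
    exact h.congr_deriv (by ring)
  -- key pointwise inequality
  have hkey : ∀ c ∈ Set.Ioo (max ε η1) η, F c ≤ H c →
      κ * lam / (ρ * η1) <
        (ρ / (κ * c)) * (κ / ρ - H c) *
          ((φ c) ^ (-1 / γ) - H c - (r + ρ - δ) / ρ)
        + (r + ρ) / (ρ * φ c) - δ / (ρ * c) := by
    intro c hc hFH
    have hc1 : η1 < c := lt_of_le_of_lt (le_max_right _ _) hc.1
    have hcε : ε < c := lt_of_le_of_lt (le_max_left _ _) hc.1
    have hcI : c ∈ Set.Ioo ε η := ⟨hcε, hc.2⟩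
    obtain ⟨hφpos, hHpos, hHlt⟩ := hD c hcI
    have hc0 : 0 < c := lt_of_le_of_lt hε0 hcε
    have hW : 0 < κ / ρ - H c := sub_pos.2 hHlt
    have hWmax : ρ * (κ / ρ - H c) * η1 ≤ κ * lam * (η1 - c) := by
      have h1 : κ / ρ - H c ≤ κ / ρ - F c := by linarith
      have h2 : (κ / ρ - F c) * (ρ * η1) = κ * lam * (η1 - c) := by
        simp only [hFdef]; field_simp; ring
      have h3 := mul_le_mul_of_nonneg_right h1 (le_of_lt (mul_pos hρ hη1pos))
      calc ρ * (κ / ρ - H c) * η1 = (κ / ρ - H c) * (ρ * η1) := by ring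
        _ ≤ (κ / ρ - F c) * (ρ * η1) := h3
        _ = κ * lam * (η1 - c) := h2
    have hple : φ c ≤ α ^ (-γ) := hφle c ⟨hcε, hc.2.le⟩
    have hGp : α ^ γ * φ c ≤ 1 := by
      rw [hrn] at hple
      calc α ^ γ * φ c ≤ α ^ γ * (α ^ γ)⁻¹ :=
            mul_le_mul_of_nonneg_left hple hGa.le
        _ = 1 := mul_inv_cancel₀ (ne_of_gt hGa)
    have hu : α ≤ (φ c) ^ (-1 / γ) := by
      have h1 : (α ^ (-γ)) ^ (-1 / γ) ≤ (φ c) ^ (-1 / γ) := by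
        apply Real.rpow_le_rpow_of_nonpos hφpos hple
        have : 0 < γ := by linarith
        rw [neg_div]
        exact neg_nonpos.mpr (by positivity)
      have h2 : (α ^ (-γ)) ^ (-1 / γ) = α := by
        rw [← Real.rpow_mul hα0.le]
        have hγ0 : γ ≠ 0 := by positivity
        have : (-γ) * (-1 / γ) = 1 := by field_simp
        rw [this, Real.rpow_one]
      linarith [h2 ▸ h1]
    have hT := key_ineq r ρ δ κ lam η1 α (α ^ γ) c (κ / ρ - H c) ((φ c) ^ (-1 / γ))
      (φ c) hr hρ hδ hκpos hlamneg hη1pos hc1 hW hWmax hφpos hGa hGp hu hid hquad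
    have hden : 0 < κ * c * η1 * ρ * φ c := by positivity
    have heq : (ρ / (κ * c)) * (κ / ρ - H c) *
          ((φ c) ^ (-1 / γ) - H c - (r + ρ - δ) / ρ)
        + (r + ρ) / (ρ * φ c) - δ / (ρ * c) - κ * lam / (ρ * η1)
        = (ρ * η1 * φ c * (κ / ρ - H c) *
            (ρ * ((φ c) ^ (-1 / γ)) + ρ * (κ / ρ - H c) - κ - r - ρ + δ)
          + κ * (η1 * c * (r + ρ) - η1 * δ * (φ c) - κ * lam * c * (φ c)))
          / (κ * c * η1 * ρ * φ c) := by
      field_simp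
      ring
    have hpos := div_pos hT hden
    rw [← heq] at hpos
    linarith
  -- main argument: suppose H exceeds F somewhere
  intro y hy
  have hFη : H η = F η := hbcH
  by_contra hcon
  push_neg at hcon
  have hyη : y < η := by
    rcases eq_or_lt_of_le hy.2 with he | h
    · exfalso; rw [he, hFη] at hcon; exact lt_irrefl _ hcon
    · exact h
  have hεy : ε < y := lt_of_le_of_lt (le_max_left _ _) hy.1
  have hsub : Set.Icc y η ⊆ Set.Ioc ε η := fun z hz => ⟨lt_of_lt_of_le hεy hz.1, hz.2⟩
  have hFcont : Continuous F := by fun_prop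
  set G : ℝ → ℝ := fun z => H z - F z with hGdef
  have hGcont : ContinuousOn G (Set.Icc y η) :=
    (hcH.mono hsub).sub (hFcont.continuousOn)
  set S : Set ℝ := Set.Icc y η ∩ G ⁻¹' (Set.Iic 0) with hSdef
  have hSclosed : IsClosed S :=
    hGcont.preimage_isClosed_of_isClosed isClosed_Icc isClosed_Iic
  have hηS : η ∈ S := by
    constructor
    · exact ⟨hyη.le, le_rfl⟩
    · simp only [Set.mem_preimage, Set.mem_Iic, hGdef]
      rw [hFη]; simp
  have hbdd : BddBelow S := ⟨y, fun z hz => hz.1.1⟩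
  set y1 : ℝ := sInf S with hy1def
  have hy1S : y1 ∈ S := hSclosed.csInf_mem ⟨η, hηS⟩ hbdd
  have hyy1 : y < y1 := by
    rcases eq_or_lt_of_le (le_csInf ⟨η, hηS⟩ (fun z hz => hz.1.1) : y ≤ y1) with he | h
    · exfalso
      have h2 : G y1 ≤ 0 := hy1S.2
      have h3 : G y ≤ 0 := by rw [he]; exact h2
      have h4 : 0 < G y := by
        simp only [hGdef, hFdef]
        linarith
      linarith
    · exact h
  have hy1η : y1 ≤ η := hy1S.1.2
  have hpos : ∀ z ∈ Set.Ico y y1, 0 < G z := by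
    intro z hz
    by_contra hle
    push_neg at hle
    have hzS : z ∈ S := ⟨⟨hz.1, le_trans hz.2.le hy1η⟩, hle⟩
    exact absurd (csInf_le hbdd hzS) (not_le.2 hz.2)
  obtain ⟨c, hcmem, hslope⟩ := exists_hasDerivAt_eq_slope G
    (fun z => ((ρ / (κ * z)) * (κ / ρ - H z) *
          ((φ z) ^ (-1 / γ) - H z - (r + ρ - δ) / ρ)
        + (r + ρ) / (ρ * φ z) - δ / (ρ * z)) - κ * lam / (ρ * η1))
    hyy1
    (hGcont.mono (Set.Icc_subset_Icc le_rfl hy1η))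
    (by
      intro x hx
      have hxI : x ∈ Set.Ioo ε η :=
        ⟨lt_trans hεy hx.1, lt_of_lt_of_le hx.2 hy1η⟩
      exact ((hsys x hxI).2).sub (hF' x))
  have hGc : 0 < G c := hpos c ⟨hcmem.1.le, hcmem.2⟩
  have hcmem' : c ∈ Set.Ioo (max ε η1) η :=
    ⟨lt_trans hy.1 hcmem.1, lt_of_lt_of_le hcmem.2 hy1η⟩
  have hFHc : F c ≤ H c := by
    simp only [hGdef] at hGc; linarith
  have hk := hkey c hcmem' hFHc
  have hGy1 : G y1 ≤ 0 := hy1S.2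
  have hGy : 0 < G y := by
    simp only [hGdef, hFdef]
    linarith
  have hslopeneg : (G y1 - G y) / (y1 - y) < 0 :=
    div_neg_of_neg_of_pos (by linarith) (by linarith)
  linarith [hk, hslope, hslopeneg]
end

section
/- Let c > 0 and let φ, H : (0,c) → ℝ with φ differentiable and positive, satisfying φ'(y) = (ρ/(κy))·(κ/ρ − H(y))·φ(y) for all y ∈ (0,c). Assume lim_{y→0⁺} H(y) = κ/ρ and that the limit lim_{y→0⁺} φ(y) exists in [0, ∞). Then for every β > 0, lim_{y→0⁺} φ(y)/y^{β} = +∞. -/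
open Real Set Filter Topology

/-- Lemma B.3: if `φ` satisfies `φ' = (ρ/(κy))(κ/ρ - H)φ` on `(0,c)` with `φ > 0`,
`H(y) → κ/ρ` as `y → 0⁺`, and `φ` has a (finite, nonnegative) limit at `0⁺`, then
`φ(y)/y^β → +∞` as `y → 0⁺` for every `β > 0`. -/
theorem phi_over_y_beta_tendsto_atTop
    (r μ σ ρ α δ γ κ : ℝ)
    (hr : 0 < r) (hμ : r < μ) (hσ : 0 < σ) (hρ : 0 < ρ)
    (hα0 : 0 < α) (hα1 : α ≤ 1) (hδ : 0 < δ) (hγ : 1 < γ)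
    (hκ : κ = (μ - r) ^ 2 / (2 * σ ^ 2))
    (c : ℝ) (hc : 0 < c)
    (φ H : ℝ → ℝ)
    (hφpos : ∀ y ∈ Set.Ioo (0:ℝ) c, 0 < φ y)
    (hφ' : ∀ y ∈ Set.Ioo (0:ℝ) c,
      HasDerivAt φ ((ρ / (κ * y)) * (κ / ρ - H y) * φ y) y)
    (hHlim : Tendsto H (𝓝[>] (0:ℝ)) (𝓝 (κ / ρ)))
    (l : ℝ) (hl : 0 ≤ l)
    (hφlim : Tendsto φ (𝓝[>] (0:ℝ)) (𝓝 l)) :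
    ∀ β : ℝ, 0 < β →
      Tendsto (fun y => φ y / y ^ β) (𝓝[>] (0:ℝ)) atTop := by
  intro β hβ
  have hμr : (0:ℝ) < μ - r := by linarith
  have hκpos : 0 < κ := by
    rw [hκ]
    exact div_pos (pow_pos hμr 2) (by positivity)
  set ε : ℝ := β / 2 with hεdef
  have hε : 0 < ε := by positivity
  -- choose d from the limit of H
  obtain ⟨d, hd, hball⟩ := Metric.tendsto_nhdsWithin_nhds.mp hHlim (ε * κ / ρ)
    (by positivity)
  set c' : ℝ := min c d with hc'def
  have hc' : 0 < c' := lt_min hc hd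
  have hsub : Set.Ioo (0:ℝ) c' ⊆ Set.Ioo 0 c := fun y hy =>
    ⟨hy.1, lt_of_lt_of_le hy.2 (min_le_left _ _)⟩
  have hHsmall : ∀ y ∈ Set.Ioo (0:ℝ) c', (ρ / κ) * (κ / ρ - H y) < ε := by
    intro y hy
    have h1 : dist (H y) (κ / ρ) < ε * κ / ρ := by
      apply hball hy.1
      rw [Real.dist_eq, sub_zero, abs_of_pos hy.1]
      exact lt_of_lt_of_le hy.2 (min_le_right _ _)
    rw [Real.dist_eq, abs_lt] at h1
    have h2 : κ / ρ - H y < ε * κ / ρ := by linarith [h1.1]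
    have h3 : (ρ / κ) * (κ / ρ - H y) < (ρ / κ) * (ε * κ / ρ) :=
      mul_lt_mul_of_pos_left h2 (by positivity)
    have h4 : (ρ / κ) * (ε * κ / ρ) = ε := by field_simp
    linarith
  set F : ℝ → ℝ := fun y => φ y * y ^ (-ε) with hFdef
  have hF : ∀ y ∈ Set.Ioo (0:ℝ) c', HasDerivAt F
      ((ρ / (κ * y)) * (κ / ρ - H y) * φ y * y ^ (-ε)
        + φ y * (-ε * y ^ (-ε - 1))) y := by
    intro y hy
    have h1 := hφ' y (hsub hy)
    have h2 : HasDerivAt (fun x : ℝ => x ^ (-ε)) (-ε * y ^ (-ε - 1)) y :=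
      Real.hasDerivAt_rpow_const (Or.inl hy.1.ne')
    exact h1.mul h2
  have hFneg : ∀ y ∈ interior (Set.Ioo (0:ℝ) c'), deriv F y < 0 := by
    rw [interior_Ioo]
    intro y hy
    rw [(hF y hy).deriv]
    have hy0 : 0 < y := hy.1
    have hQ : (0:ℝ) < y ^ (-ε - 1) := Real.rpow_pos_of_pos hy0 _
    have hφy : 0 < φ y := hφpos y (hsub hy)
    have hsmall := hHsmall y hy
    have hP : y ^ (-ε) = y ^ (-ε - 1) * y := by
      rw [← Real.rpow_add_one hy0.ne' (-ε - 1)]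
      congr 1
      ring
    rw [hP]
    have key : (ρ / (κ * y)) * (κ / ρ - H y) * φ y * y
        = (ρ / κ) * (κ / ρ - H y) * φ y := by
      field_simp
    have expand : (ρ / (κ * y)) * (κ / ρ - H y) * φ y * (y ^ (-ε - 1) * y)
        + φ y * (-ε * y ^ (-ε - 1))
        = y ^ (-ε - 1) * ((ρ / (κ * y)) * (κ / ρ - H y) * φ y * y - ε * φ y) := by
      ring
    rw [expand, key]
    apply mul_neg_of_pos_of_neg hQ
    nlinarith [mul_lt_mul_of_pos_right hsmall hφy]
  have hanti : StrictAntiOn F (Set.Ioo (0:ℝ) c') :=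
    strictAntiOn_of_deriv_neg (convex_Ioo _ _)
      (fun y hy => (hF y hy).continuousAt.continuousWithinAt) hFneg
  set y₁ : ℝ := c' / 2 with hy₁def
  have hy₁pos : 0 < y₁ := by positivity
  have hy₁mem : y₁ ∈ Set.Ioo (0:ℝ) c' := ⟨hy₁pos, by simp [hy₁def]; linarith⟩
  set m : ℝ := F y₁ with hmdef
  have hm : 0 < m := mul_pos (hφpos y₁ (hsub hy₁mem)) (Real.rpow_pos_of_pos hy₁pos _)
  -- eventual lower bound
  have hev : ∀ᶠ y in 𝓝[>] (0:ℝ), m * y ^ (ε - β) ≤ φ y / y ^ β := by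
    filter_upwards [Ioo_mem_nhdsGT_of_mem (⟨le_refl (0:ℝ), hy₁pos⟩ : (0:ℝ) ∈ Set.Ico 0 y₁)]
      with y hy
    have hy0 : 0 < y := hy.1
    have hymem : y ∈ Set.Ioo (0:ℝ) c' := ⟨hy0, lt_trans hy.2 hy₁mem.2⟩
    have hlt : m < F y := hanti hymem hy₁mem hy.2
    have hεpos : (0:ℝ) < y ^ ε := Real.rpow_pos_of_pos hy0 _
    have h1 : m * y ^ ε < φ y := by
      have : F y = φ y / y ^ ε := by
        show φ y * y ^ (-ε) = φ y / y ^ ε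
        rw [Real.rpow_neg hy0.le, div_eq_mul_inv]
      rw [this, lt_div_iff₀ hεpos] at hlt
      exact hlt
    have h2 : m * y ^ (ε - β) = m * y ^ ε / y ^ β := by
      rw [Real.rpow_sub hy0]; ring
    rw [h2]
    have hβpos : (0:ℝ) < y ^ β := Real.rpow_pos_of_pos hy0 _
    gcongr
  -- the lower bound tends to atTop
  have hlow : Tendsto (fun y : ℝ => m * y ^ (ε - β)) (𝓝[>] (0:ℝ)) atTop := by
    have h1 : Tendsto (fun y : ℝ => y ^ (β - ε)) (𝓝[>] (0:ℝ)) (𝓝[>] (0:ℝ)) := by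
      apply tendsto_nhdsWithin_of_tendsto_nhds_of_eventually_within
      · have hcont := (Real.continuousAt_rpow_const 0 (β - ε) (Or.inr (by linarith))).tendsto
        have h0 : (0:ℝ) ^ (β - ε) = 0 := Real.zero_rpow (by linarith [hε] : β - ε ≠ 0)
        rw [h0] at hcont
        exact hcont.mono_left nhdsWithin_le_nhds
      · filter_upwards [self_mem_nhdsWithin] with y hy
        exact Real.rpow_pos_of_pos hy _
    have h2 : Tendsto (fun y : ℝ => (y ^ (β - ε))⁻¹) (𝓝[>] (0:ℝ)) atTop :=
      tendsto_inv_nhdsGT_zero.comp h1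
    have h3 : Tendsto (fun y : ℝ => y ^ (ε - β)) (𝓝[>] (0:ℝ)) atTop := by
      apply h2.congr'
      filter_upwards [self_mem_nhdsWithin] with y hy
      show (y ^ (β - ε))⁻¹ = y ^ (ε - β)
      rw [← Real.rpow_neg (le_of_lt hy)]
      ring_nf
    exact h3.const_mul_atTop hm
  exact tendsto_atTop_mono' _ hev hlow
end

section
/- Let x̲ < x* be real numbers and a₀, b₀ > 0, and set a(x) := a₀·(x − x̲) and b(x) := b₀·(x − x̲) for x ∈ (x̲, x*). Define the Feller test function ψ(x) := ∫_{x*}^{x} ∫_{x*}^{y} (2/a(z)²)·exp( −2·∫_{z}^{y} (b(η)/a(η)²) dη ) dz dy for x ∈ (x̲, x*). Then lim_{x→x̲⁺} ψ(x) = +∞. -/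
open Real Set Filter Topology intervalIntegral

lemma aux_log_int (xl a0 b0 z y : ℝ) (ha0 : 0 < a0) (hz : xl < z) (hy : xl < y) :
    (∫ t in z..y, (b0 * (t - xl)) / (a0 * (t - xl)) ^ 2)
      = (b0 / a0 ^ 2) * (Real.log (y - xl) - Real.log (z - xl)) := by
  have hmem : ∀ t ∈ Set.uIcc z y, xl < t := by
    intro t ht
    rcases Set.mem_uIcc.mp ht with h | h
    · exact lt_of_lt_of_le hz h.1
    · exact lt_of_lt_of_le hy h.1
  have hcongr : Set.EqOn (fun t => (b0 * (t - xl)) / (a0 * (t - xl)) ^ 2)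
      (fun t => (b0 / a0 ^ 2) * (t - xl)⁻¹) (Set.uIcc z y) := by
    intro t ht
    have h1 : t - xl ≠ 0 := sub_ne_zero.mpr (ne_of_gt (hmem t ht))
    have h2 : a0 ≠ 0 := ne_of_gt ha0
    field_simp
  rw [intervalIntegral.integral_congr hcongr, intervalIntegral.integral_const_mul]
  have h3 : (∫ t in z..y, (t - xl)⁻¹) = ∫ u in (z - xl)..(y - xl), u⁻¹ :=
    intervalIntegral.integral_comp_sub_right (fun u => u⁻¹) xl
  rw [h3, integral_inv (Set.notMem_uIcc_of_lt (by linarith) (by linarith)),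
    Real.log_div (by intro h; linarith [sub_eq_zero.mp h]) (by intro h; linarith [sub_eq_zero.mp h])]

lemma aux_inner (xl xs a0 b0 y : ℝ) (ha0 : 0 < a0) (hb0 : 0 < b0)
    (hy : xl < y) (hyx : y ≤ xs) :
    (2 / a0 ^ 2) * ((y - xl)⁻¹ - (xs - xl)⁻¹)
      ≤ ∫ z in y..xs, (2 / (a0 * (z - xl)) ^ 2) *
          Real.exp (-2 * ∫ t in z..y, (b0 * (t - xl)) / (a0 * (t - xl)) ^ 2) := by
  have huIcc : Set.uIcc y xs = Set.Icc y xs := Set.uIcc_of_le hyx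
  have hmem : ∀ z ∈ Set.uIcc y xs, xl < z := by
    intro z hz
    rw [huIcc] at hz
    exact lt_of_lt_of_le hy hz.1
  set g : ℝ → ℝ := fun z => (2 / (a0 * (z - xl)) ^ 2) *
      Real.exp (-2 * ((b0 / a0 ^ 2) * (Real.log (y - xl) - Real.log (z - xl)))) with hg
  have hcongr : Set.EqOn (fun z => (2 / (a0 * (z - xl)) ^ 2) *
      Real.exp (-2 * ∫ t in z..y, (b0 * (t - xl)) / (a0 * (t - xl)) ^ 2)) g
      (Set.uIcc y xs) := by
    intro z hz
    simp only [hg]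
    rw [aux_log_int xl a0 b0 z y ha0 (hmem z hz) hy]
  rw [intervalIntegral.integral_congr hcongr]
  -- continuity of g on [y, xs]
  have hne : ∀ z ∈ Set.uIcc y xs, z - xl ≠ 0 :=
    fun z hz => sub_ne_zero.mpr (ne_of_gt (hmem z hz))
  have hcont : ContinuousOn g (Set.uIcc y xs) := by
    apply ContinuousOn.mul
    · exact continuousOn_const.div (by fun_prop)
        (fun z hz => pow_ne_zero _ (mul_ne_zero (ne_of_gt ha0) (hne z hz)))
    · apply Real.continuous_exp.comp_continuousOn
      apply ContinuousOn.mul continuousOn_const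
      apply ContinuousOn.mul continuousOn_const
      apply ContinuousOn.sub continuousOn_const
      exact Real.continuousOn_log.comp (by fun_prop) (fun z hz => hne z hz)
  -- lower function
  set l : ℝ → ℝ := fun z => (2 / a0 ^ 2) * ((z - xl) ^ (-2 : ℤ)) with hl
  have hlcont : ContinuousOn l (Set.uIcc y xs) := by
    apply ContinuousOn.mul continuousOn_const
    exact (continuousOn_id.sub continuousOn_const).zpow₀ _ (fun z hz => Or.inl (hne z hz))
  have hle : ∀ z ∈ Set.Icc y xs, l z ≤ g z := by
    intro z hz
    rw [← huIcc] at hz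
    have h1 : xl < z := hmem z hz
    have h2 : y ≤ z := by rw [huIcc] at hz; exact hz.1
    have hexp : 1 ≤ Real.exp (-2 * ((b0 / a0 ^ 2) * (Real.log (y - xl) - Real.log (z - xl)))) := by
      rw [← Real.exp_zero]
      apply Real.exp_le_exp.mpr
      have hlog : Real.log (y - xl) ≤ Real.log (z - xl) :=
        Real.log_le_log (by linarith) (by linarith)
      nlinarith [div_pos hb0 (pow_pos ha0 2)]
    have hbase : l z = 2 / (a0 * (z - xl)) ^ 2 := by
      simp only [hl]
      rw [zpow_neg, zpow_two]
      field_simp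
    rw [hbase]
    have hbpos : (0:ℝ) ≤ 2 / (a0 * (z - xl)) ^ 2 := by positivity
    calc 2 / (a0 * (z - xl)) ^ 2 = 2 / (a0 * (z - xl)) ^ 2 * 1 := by ring
      _ ≤ g z := mul_le_mul_of_nonneg_left hexp hbpos
  have hmono := intervalIntegral.integral_mono_on (μ := MeasureTheory.volume) hyx
    (hlcont.intervalIntegrable) (hcont.intervalIntegrable) hle
  refine le_trans (le_of_eq ?_) hmono
  rw [hl]
  simp only
  rw [intervalIntegral.integral_const_mul]
  have h3 : (∫ z in y..xs, (z - xl) ^ (-2 : ℤ)) = ∫ u in (y - xl)..(xs - xl), u ^ (-2 : ℤ) :=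
    intervalIntegral.integral_comp_sub_right (fun u => u ^ (-2 : ℤ)) xl
  rw [h3, integral_zpow (Or.inr ⟨by norm_num,
    Set.notMem_uIcc_of_lt (by linarith) (by linarith)⟩)]
  norm_num
  exact Or.inl (by ring)

/-- Feller test at the lower boundary: with `a(x) = a₀ (x - x̲)` and
`b(x) = b₀ (x - x̲)`, the Feller test function
`ψ(x) = ∫_{x*}^{x} ∫_{x*}^{y} (2/a(z)²) exp(-2 ∫_z^y b(η)/a(η)² dη) dz dy`
tends to `+∞` as `x → x̲⁺`. -/
theorem feller_test_lower_boundary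
    (xl xs a0 b0 : ℝ) (hx : xl < xs) (ha0 : 0 < a0) (hb0 : 0 < b0)
    (ψ : ℝ → ℝ)
    (hψ : ∀ x ∈ Set.Ioo xl xs, ψ x =
      ∫ y in xs..x, ∫ z in xs..y,
        (2 / (a0 * (z - xl)) ^ 2) *
          Real.exp (-2 * ∫ t in z..y, (b0 * (t - xl)) / (a0 * (t - xl)) ^ 2)) :
    Tendsto ψ (𝓝[>] xl) atTop := by
  have hxsxl : (0:ℝ) < xs - xl := sub_pos.mpr hx
  set L : ℝ → ℝ := fun x => (2 / a0 ^ 2) *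
      ((Real.log (xs - xl) - Real.log (x - xl)) - 1) with hLdef
  have key : ∀ x ∈ Set.Ioo xl xs, L x ≤ ψ x := by
    rintro x ⟨hx1, hx2⟩
    have huIcc : Set.uIcc x xs = Set.Icc x xs := Set.uIcc_of_le (le_of_lt hx2)
    have hmemx : ∀ y ∈ Set.uIcc x xs, xl < y := by
      intro y hy
      rw [huIcc] at hy
      exact lt_of_lt_of_le hx1 hy.1
    rw [hψ x ⟨hx1, hx2⟩, intervalIntegral.integral_symm x xs]
    have hswap : (fun y => ∫ z in xs..y, (2 / (a0 * (z - xl)) ^ 2) *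
          Real.exp (-2 * ∫ t in z..y, (b0 * (t - xl)) / (a0 * (t - xl)) ^ 2))
        = fun y => -∫ z in y..xs, (2 / (a0 * (z - xl)) ^ 2) *
          Real.exp (-2 * ∫ t in z..y, (b0 * (t - xl)) / (a0 * (t - xl)) ^ 2) := by
      funext y
      exact intervalIntegral.integral_symm y xs
    rw [hswap, intervalIntegral.integral_neg, neg_neg]
    set F : ℝ → ℝ := fun y => ∫ z in y..xs, (2 / (a0 * (z - xl)) ^ 2) *
        Real.exp (-2 * ∫ t in z..y, (b0 * (t - xl)) / (a0 * (t - xl)) ^ 2) with hFdef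
    set G : ℝ → ℝ := fun z => (2 / (a0 * (z - xl)) ^ 2) *
        Real.exp (2 * ((b0 / a0 ^ 2) * Real.log (z - xl))) with hGdef
    set E : ℝ → ℝ := fun y => Real.exp (-2 * ((b0 / a0 ^ 2) * Real.log (y - xl))) with hEdef
    have hFeq : Set.EqOn F (fun y => E y * ∫ z in y..xs, G z) (Set.uIcc x xs) := by
      intro y hy
      have hy1 : xl < y := hmemx y hy
      simp only [hFdef, hEdef]
      rw [← intervalIntegral.integral_const_mul]
      apply intervalIntegral.integral_congr
      intro z hz
      have hz1 : xl < z := by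
        rcases Set.mem_uIcc.mp hz with h | h
        · exact lt_of_lt_of_le hy1 h.1
        · linarith [h.1]
      simp only [hGdef]
      rw [aux_log_int xl a0 b0 z y ha0 hz1 hy1]
      have hexp : Real.exp (-2 * ((b0 / a0 ^ 2) * (Real.log (y - xl) - Real.log (z - xl))))
          = Real.exp (-2 * ((b0 / a0 ^ 2) * Real.log (y - xl))) *
            Real.exp (2 * ((b0 / a0 ^ 2) * Real.log (z - xl))) := by
        rw [← Real.exp_add]; ring_nf
      rw [hexp]; ring
    have hne : ∀ y ∈ Set.uIcc x xs, y - xl ≠ 0 :=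
      fun y hy => sub_ne_zero.mpr (ne_of_gt (hmemx y hy))
    have hGcont : ContinuousOn G (Set.uIcc x xs) := by
      apply ContinuousOn.mul
      · exact continuousOn_const.div (by fun_prop)
          (fun z hz => pow_ne_zero _ (mul_ne_zero (ne_of_gt ha0) (hne z hz)))
      · apply Real.continuous_exp.comp_continuousOn
        apply ContinuousOn.mul continuousOn_const
        apply ContinuousOn.mul continuousOn_const
        exact Real.continuousOn_log.comp (by fun_prop) (fun z hz => hne z hz)
    have hEcont : ContinuousOn E (Set.uIcc x xs) := by
      apply Real.continuous_exp.comp_continuousOn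
      apply ContinuousOn.mul continuousOn_const
      apply ContinuousOn.mul continuousOn_const
      exact Real.continuousOn_log.comp (by fun_prop) (fun z hz => hne z hz)
    have hPhicont : ContinuousOn (fun y => ∫ z in y..xs, G z) (Set.uIcc x xs) :=
      intervalIntegral.continuousOn_primitive_interval_left
        (hGcont.integrableOn_uIcc)
    have hFcont : ContinuousOn F (Set.uIcc x xs) :=
      ContinuousOn.congr (hEcont.mul hPhicont) hFeq
    have hFint : IntervalIntegrable F MeasureTheory.volume x xs :=
      hFcont.intervalIntegrable
    set φ : ℝ → ℝ := fun y => (2 / a0 ^ 2) * ((y - xl)⁻¹ - (xs - xl)⁻¹) with hφdef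
    have hφcont : ContinuousOn φ (Set.uIcc x xs) := by
      apply ContinuousOn.mul continuousOn_const
      apply ContinuousOn.sub
      · exact ContinuousOn.inv₀ (by fun_prop) (fun y hy => hne y hy)
      · exact continuousOn_const
    have hle : ∀ y ∈ Set.Icc x xs, φ y ≤ F y := by
      intro y hy
      exact aux_inner xl xs a0 b0 y ha0 hb0 (lt_of_lt_of_le hx1 hy.1) hy.2
    have hmono := intervalIntegral.integral_mono_on (μ := MeasureTheory.volume)
      (le_of_lt hx2) (hφcont.intervalIntegrable) hFint hle
    refine le_trans ?_ hmono
    -- compute ∫ φ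
    have hint1 : IntervalIntegrable (fun y => (y - xl)⁻¹) MeasureTheory.volume x xs := by
      apply ContinuousOn.intervalIntegrable
      exact ContinuousOn.inv₀ (by fun_prop) (fun y hy => hne y hy)
    have hcalc : (∫ y in x..xs, φ y)
        = (2 / a0 ^ 2) * ((Real.log (xs - xl) - Real.log (x - xl))
            - (xs - x) * (xs - xl)⁻¹) := by
      simp only [hφdef]
      rw [intervalIntegral.integral_const_mul,
        intervalIntegral.integral_sub hint1 intervalIntegrable_const,
        intervalIntegral.integral_const]
      have h3 : (∫ y in x..xs, (y - xl)⁻¹) = ∫ u in (x - xl)..(xs - xl), u⁻¹ :=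
        intervalIntegral.integral_comp_sub_right (fun u => u⁻¹) xl
      rw [h3, integral_inv (Set.notMem_uIcc_of_lt (by linarith) (by linarith)),
        Real.log_div (by intro h; linarith [sub_eq_zero.mp h])
          (by intro h; linarith [sub_eq_zero.mp h])]
      rw [smul_eq_mul]
    rw [hcalc, hLdef]
    simp only
    apply mul_le_mul_of_nonneg_left _ (by positivity)
    apply sub_le_sub_left
    rw [← div_eq_mul_inv, div_le_one hxsxl]
    linarith
  -- limit of L
  have hLlim : Tendsto L (𝓝[>] xl) atTop := by
    have h1 : Tendsto (fun x : ℝ => x - xl) (𝓝[>] xl) (𝓝[>] (0:ℝ)) := by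
      apply tendsto_nhdsWithin_of_tendsto_nhds_of_eventually_within
      · have : Tendsto (fun x : ℝ => x - xl) (𝓝 xl) (𝓝 (xl - xl)) :=
          (continuous_id.sub continuous_const).tendsto xl
        simpa using this.mono_left nhdsWithin_le_nhds
      · filter_upwards [self_mem_nhdsWithin] with x hx'
        exact sub_pos.mpr (Set.mem_Ioi.mp hx')
    have h2 : Tendsto (fun x : ℝ => Real.log (x - xl)) (𝓝[>] xl) atBot :=
      Real.tendsto_log_nhdsGT_zero.comp h1
    have h3 : Tendsto (fun x : ℝ => -Real.log (x - xl)) (𝓝[>] xl) atTop :=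
      Filter.tendsto_neg_atBot_atTop.comp h2
    have h4 := Filter.tendsto_atTop_add_const_left (𝓝[>] xl)
      (Real.log (xs - xl) - 1) h3
    have h5 := h4.const_mul_atTop (show (0:ℝ) < 2 / a0 ^ 2 by positivity)
    rw [hLdef]
    exact h5.congr (fun x => by ring)
  apply tendsto_atTop_mono' _ _ hLlim
  filter_upwards [Ioo_mem_nhdsGT_of_mem (Set.mem_Ico.mpr ⟨le_refl xl, hx⟩)] with x hx'
  exact key x hx'
end

section
/- Let 0 < a < b and let φ, H : (a,b) → ℝ be differentiable with φ > 0 on (a,b), satisfying the habit free-boundary ODE system on (a,b). Then φ is twice differentiable on (a,b) and satisfies the second-order differential equation (κ/ρ)·y²·φ''(y) + ( φ(y)^{−1/γ} − (r+ρ−δ)/ρ )·y·φ'(y) − (δ/ρ)·φ(y) + ((r+ρ)/ρ)·y = 0 for all y ∈ (a,b). -/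
open Real Set Filter Topology

/-- If `(φ, H)` solves the habit free-boundary ODE system on `(a,b)` with `φ > 0`,
then `φ` is twice differentiable on `(a,b)` and satisfies the second-order equation
`(κ/ρ) y² φ'' + (φ^(-1/γ) - (r+ρ-δ)/ρ) y φ' - (δ/ρ) φ + ((r+ρ)/ρ) y = 0`. -/
theorem phi_second_order_ode
    (r μ σ ρ α δ γ κ : ℝ)
    (hr : 0 < r) (hμ : r < μ) (hσ : 0 < σ) (hρ : 0 < ρ)
    (hα0 : 0 < α) (hα1 : α ≤ 1) (hδ : 0 < δ) (hγ : 1 < γ)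
    (hκ : κ = (μ - r) ^ 2 / (2 * σ ^ 2))
    (a b : ℝ) (ha : 0 < a) (hab : a < b)
    (φ H : ℝ → ℝ)
    (hφpos : ∀ y ∈ Set.Ioo a b, 0 < φ y)
    (hφ' : ∀ y ∈ Set.Ioo a b,
      HasDerivAt φ ((ρ / (κ * y)) * (κ / ρ - H y) * φ y) y)
    (hH' : ∀ y ∈ Set.Ioo a b,
      HasDerivAt H ((ρ / (κ * y)) * (κ / ρ - H y) *
          ((φ y) ^ (-1 / γ) - H y - (r + ρ - δ) / ρ)
        + (r + ρ) / (ρ * φ y) - δ / (ρ * y)) y) :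
    ∀ y ∈ Set.Ioo a b,
      DifferentiableAt ℝ (deriv φ) y ∧
      (κ / ρ) * y ^ 2 * deriv (deriv φ) y
        + ((φ y) ^ (-1 / γ) - (r + ρ - δ) / ρ) * y * deriv φ y
        - (δ / ρ) * φ y + ((r + ρ) / ρ) * y = 0 := by
  intro y hy
  obtain ⟨hya, hyb⟩ := hy
  have hy0 : 0 < y := ha.trans hya
  have hκ0 : 0 < κ := by
    rw [hκ]
    exact div_pos (pow_pos (sub_pos.2 hμ) 2) (by positivity)
  have hφy : 0 < φ y := hφpos y ⟨hya, hyb⟩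
  have hκy : κ * y ≠ 0 := by positivity
  have hHy := hH' y ⟨hya, hyb⟩
  have hφy' := hφ' y ⟨hya, hyb⟩
  -- derivative of z ↦ ρ / (κ * z)
  have h1 : HasDerivAt (fun z => ρ / (κ * z))
      ((0 * (κ * y) - ρ * (κ * 1)) / (κ * y) ^ 2) y :=
    (hasDerivAt_const y ρ).div ((hasDerivAt_id y).const_mul κ) hκy
  have h2 : HasDerivAt (fun z => κ / ρ - H z)
      (0 - ((ρ / (κ * y)) * (κ / ρ - H y) *
          ((φ y) ^ (-1 / γ) - H y - (r + ρ - δ) / ρ)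
        + (r + ρ) / (ρ * φ y) - δ / (ρ * y))) y :=
    (hasDerivAt_const y (κ / ρ)).sub hHy
  have h3 := (h1.mul h2).mul hφy'
  have hev : deriv φ =ᶠ[𝓝 y] fun z => ρ / (κ * z) * (κ / ρ - H z) * φ z := by
    filter_upwards [isOpen_Ioo.mem_nhds (⟨hya, hyb⟩ : y ∈ Set.Ioo a b)] with z hz
    exact (hφ' z hz).deriv
  have hdiff : DifferentiableAt ℝ (deriv φ) y :=
    (hev.differentiableAt_iff).mpr h3.differentiableAt
  refine ⟨hdiff, ?_⟩
  have hd2 : deriv (deriv φ) y =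
      ((0 * (κ * y) - ρ * (κ * 1)) / (κ * y) ^ 2 * (κ / ρ - H y)
        + ρ / (κ * y) * (0 - ((ρ / (κ * y)) * (κ / ρ - H y) *
            ((φ y) ^ (-1 / γ) - H y - (r + ρ - δ) / ρ)
          + (r + ρ) / (ρ * φ y) - δ / (ρ * y)))) * φ y
      + ρ / (κ * y) * (κ / ρ - H y) * ((ρ / (κ * y)) * (κ / ρ - H y) * φ y) := by
    rw [hev.deriv_eq]; exact h3.deriv
  rw [hd2, hφy'.deriv]
  have hρ' : ρ ≠ 0 := ne_of_gt hρ
  have hκ' : κ ≠ 0 := ne_of_gt hκ0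
  have hy' : y ≠ 0 := ne_of_gt hy0
  have hφ' : φ y ≠ 0 := ne_of_gt hφy
  field_simp
  ring
end
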